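/- Let (q_n)_{n≥1} be a sequence of integers with q_n ≥ 3 tending to infinity such that log(P(q_n)) = o(log(q_n)) as n → ∞, where P(m) denotes the largest prime factor of m. For each n write q′_n := ∏_{p | q_n} p (the radical of q_n) and K_n := log(q_n)/log(q′_n). Then (log(q′_n)·log(2·K_n)) / log(log(q′_n)) = o(log(q_n)) as n → ∞. -/

import Mathlib

open Filter Asymptotics

lemma log_three_lb' : (1.09:ℝ) ≤ Real.log 3 := by
  have he : Real.exp 1 < 2.7182818286 := Real.exp_one_lt_d9
  have hp : (0:ℝ) < Real.exp 1 / 3 := by positivity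
  have h := Real.log_le_sub_one_of_pos hp
  rw [Real.log_div (Real.exp_ne_zero 1) (by norm_num), Real.log_exp] at h
  nlinarith

lemma log_log_lb' (m : ℕ) (h2 : 2 ≤ m) :
    (0.08 : ℝ) ≤ |Real.log (Real.log m)| := by
  rcases eq_or_lt_of_le h2 with h | h
  · -- m = 2
    have hlog2 : Real.log 2 < 0.6931471808 := Real.log_two_lt_d9
    have hpos : (0:ℝ) < Real.log 2 := Real.log_pos one_lt_two
    have hd : Real.log (Real.log 2) ≤ Real.log 2 - 1 := Real.log_le_sub_one_of_pos hpos
    rw [← h]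
    push_cast
    calc (0.08:ℝ) ≤ -(Real.log (Real.log 2)) := by linarith
    _ ≤ |Real.log (Real.log 2)| := neg_le_abs _
  · have h3 : (3:ℝ) ≤ (m:ℝ) := by exact_mod_cast h
    have hm : (1.09:ℝ) ≤ Real.log m :=
      le_trans log_three_lb' (Real.log_le_log (by norm_num) h3)
    have hx : (0:ℝ) < Real.log m := by linarith
    have hinv := Real.log_le_sub_one_of_pos (inv_pos.mpr hx)
    rw [Real.log_inv] at hinv
    have hinvle : (Real.log m)⁻¹ ≤ (1.09:ℝ)⁻¹ := by
      apply inv_anti₀ (by norm_num) hm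
    have : (0.08:ℝ) ≤ Real.log (Real.log m) := by nlinarith
    exact le_trans this (le_abs_self _)

/-- if `(q_n)` is a sequence of integers `≥ 3` tending to infinity with
`log P(q_n) = o(log q_n)`, where `P(m)` is the largest prime factor of `m`, then with
`q′_n = ∏_{p ∣ q_n} p` (the radical) and `K_n = log(q_n)/log(q′_n)`, one has
`log(q′_n)·log(2K_n)/log(log(q′_n)) = o(log q_n)` as `n → ∞`. -/
theorem chang_factor_isLittleO_of_smooth (q : ℕ → ℕ) (hq3 : ∀ n, 3 ≤ q n)
    (hq : Tendsto q atTop atTop)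
    (hsmooth : (fun n => Real.log (((q n).primeFactors.sup id : ℕ) : ℝ)) =o[atTop]
      fun n => Real.log (q n)) :
    (fun n => Real.log (∏ p ∈ (q n).primeFactors, p) *
        Real.log (2 * (Real.log (q n) / Real.log (∏ p ∈ (q n).primeFactors, p))) /
        Real.log (Real.log (∏ p ∈ (q n).primeFactors, p)))
      =o[atTop] fun n => Real.log (q n) := by
  rw [isLittleO_iff]
  intro ε hε
  set c : ℝ := 0.08 with hc
  set M : ℝ := Real.exp (4/ε) with hM
  have hMpos : 0 < M := Real.exp_pos _
  have hL : Tendsto (fun n => Real.log (q n)) atTop atTop :=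
    Real.tendsto_log_atTop.comp (tendsto_natCast_atTop_atTop.comp hq)
  have hsmall : ∀ᶠ x : ℝ in atTop, M/c * (Real.log 4 + Real.log x) ≤ ε * x := by
    have h1 : (fun x:ℝ => M/c * (Real.log 4 + Real.log x)) =o[atTop] (fun x:ℝ => x) := by
      have h2 : (fun x:ℝ => Real.log 4 + Real.log x) =o[atTop] (fun x:ℝ => x) :=
        (isLittleO_const_id_atTop _).add Real.isLittleO_log_id_atTop
      exact h2.const_mul_left _
    have h3 := h1.bound hε
    filter_upwards [h3, eventually_ge_atTop (0:ℝ)] with x hx hx0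
    calc M/c * (Real.log 4 + Real.log x) ≤ ‖M/c * (Real.log 4 + Real.log x)‖ := by
          rw [Real.norm_eq_abs]; exact le_abs_self _
      _ ≤ ε * ‖x‖ := hx
      _ = ε * x := by rw [Real.norm_eq_abs, abs_of_nonneg hx0]
  filter_upwards [hL.eventually hsmall] with n hn
  rw [← Nat.cast_prod]
  have hq3n := hq3 n
  have hq0 : 0 < q n := by omega
  set r : ℕ := ∏ p ∈ (q n).primeFactors, p with hr
  have hrdvd : r ∣ q n := Nat.prod_primeFactors_dvd _
  have hr2 : 2 ≤ r := by
    obtain ⟨p, hp⟩ := Nat.nonempty_primeFactors.mpr (by omega : 1 < q n)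
    have hpr : p.Prime := Nat.prime_of_mem_primeFactors hp
    have hpd : p ∣ r := Finset.dvd_prod_of_mem _ hp
    have hrpos : 0 < r := Nat.pos_of_dvd_of_pos hrdvd hq0
    exact le_trans hpr.two_le (Nat.le_of_dvd hrpos hpd)
  have hrle : r ≤ q n := Nat.le_of_dvd hq0 hrdvd
  set L : ℝ := Real.log (q n) with hLdef
  set L' : ℝ := Real.log r with hL'def
  have hL'pos : 0 < L' := Real.log_pos (by exact_mod_cast hr2)
  have hL'2 : Real.log 2 ≤ L' := Real.log_le_log (by norm_num) (by exact_mod_cast hr2)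
  have hL'L : L' ≤ L :=
    Real.log_le_log (by exact_mod_cast (by omega : 0 < r)) (by exact_mod_cast hrle)
  have hL1 : 1 < L := by
    have : Real.log 3 ≤ L := Real.log_le_log (by norm_num) (by exact_mod_cast hq3n)
    have := log_three_lb'
    linarith
  have hLpos : 0 < L := by linarith
  have hlog2 : (0.69:ℝ) < Real.log 2 := by
    have := Real.log_two_gt_d9; linarith
  have hK1 : 1 ≤ L / L' := (one_le_div hL'pos).mpr hL'L
  have hK2pos : 0 < 2 * (L / L') := by linarith
  have hlogK2pos : 0 < Real.log (2 * (L / L')) := Real.log_pos (by linarith)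
  set N : ℝ := L' * Real.log (2 * (L / L')) with hN
  have hNnonneg : 0 ≤ N := le_of_lt (mul_pos hL'pos hlogK2pos)
  have hNle2L : N ≤ 2 * L := by
    have h1 : Real.log (2 * (L / L')) ≤ 2 * (L / L') := Real.log_le_self (by positivity)
    have h2 : N ≤ L' * (2 * (L / L')) := mul_le_mul_of_nonneg_left h1 hL'pos.le
    have h3 : L' * (2 * (L / L')) = 2 * L := by field_simp
    linarith
  have hlogK2le : Real.log (2 * (L / L')) ≤ Real.log 4 + Real.log L := by
    have h4 : 2 * (L / L') ≤ 4 * L := by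
      have h5 : L / L' ≤ 2 * L := by
        rw [div_le_iff₀ hL'pos]; nlinarith
      linarith
    calc Real.log (2 * (L / L')) ≤ Real.log (4 * L) := Real.log_le_log hK2pos h4
      _ = Real.log 4 + Real.log L := Real.log_mul (by norm_num) (ne_of_gt hLpos)
  rw [Real.norm_eq_abs, Real.norm_eq_abs, abs_of_pos hLpos]
  by_cases hcase : 4/ε ≤ Real.log L'
  · -- large L'
    have hd : 0 < Real.log L' := lt_of_lt_of_le (by positivity) hcase
    have hexpr : N / Real.log L' ≤ 2 * L / (4/ε) :=
      div_le_div₀ (by positivity) hNle2L (by positivity) hcase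
    have h2 : 2 * L / (4/ε) = ε * L / 2 := by field_simp; ring
    rw [abs_of_nonneg (div_nonneg hNnonneg hd.le)]
    nlinarith [mul_pos hε hLpos]
  · -- small L'
    push_neg at hcase
    have hL'M : L' ≤ M := by
      rw [hM, ← Real.exp_log hL'pos]
      exact Real.exp_le_exp.mpr hcase.le
    have hcabs : c ≤ |Real.log L'| := log_log_lb' r hr2
    have hcpos : (0:ℝ) < c := by norm_num [hc]
    have hlogLnn : 0 ≤ Real.log L := Real.log_nonneg hL1.le
    have hsum : 0 ≤ Real.log 4 + Real.log L := by
      have : (0:ℝ) ≤ Real.log 4 := Real.log_nonneg (by norm_num)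
      linarith
    have hNleM : N ≤ M * (Real.log 4 + Real.log L) := by
      calc N ≤ L' * (Real.log 4 + Real.log L) :=
            mul_le_mul_of_nonneg_left hlogK2le hL'pos.le
        _ ≤ M * (Real.log 4 + Real.log L) := mul_le_mul_of_nonneg_right hL'M hsum
    calc |N / Real.log L'| = N / |Real.log L'| := by
          rw [abs_div, abs_of_nonneg hNnonneg]
      _ ≤ N / c := by gcongr
      _ ≤ M * (Real.log 4 + Real.log L) / c := by gcongr
      _ = M / c * (Real.log 4 + Real.log L) := by ring
      _ ≤ ε * L := hn
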